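/- arXiv:2009.01024 — 2 statements merged into one kernel-verified Lean document; each statement's English description precedes it below -/
import Mathlib

section
/- For n ≥ 2, the number of matchings of [2n] minimally containing the pattern 1212 equals binom(2n-1, n-2). -/
/-- A (perfect) matching on `Fin m`: a fixed-point-free involution. -/
def IsMatching {m : ℕ} (f : Fin m → Fin m) : Prop :=
  Function.Involutive f ∧ ∀ i, f i ≠ i

/-- The pattern `σ` occurs in `τ`. -/
def Occurs {m M : ℕ} (σ : Fin m → Fin m) (τ : Fin M → Fin M) : Prop :=
  ∃ g : Fin m → Fin M, StrictMono g ∧ ∀ p, τ (g p) = g (σ p)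

def Avoids {m M : ℕ} (σ : Fin m → Fin m) (τ : Fin M → Fin M) : Prop :=
  ¬ Occurs σ τ

def juxt {m M : ℕ} (σ : Fin m → Fin m) (τ : Fin M → Fin M) :
    Fin (m + M) → Fin (m + M) :=
  fun i => finSumFinEquiv (Sum.map σ τ (finSumFinEquiv.symm i))

def liftMatching {m : ℕ} (σ : Fin m → Fin m) : Fin (m + 2) → Fin (m + 2) := fun i =>
  if _ : i.val = 0 then ⟨m + 1, by omega⟩
  else if _ : i.val = m + 1 then ⟨0, by omega⟩
  else ⟨(σ ⟨i.val - 1, by have := i.isLt; omega⟩).val + 1, by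
    have := (σ ⟨i.val - 1, by have := i.isLt; omega⟩).isLt; omega⟩

/-- `τ` contains `σ`, but deleting the rightmost edge of `τ` (the edge containing the
last vertex) destroys every occurrence of `σ`. -/
def MinContains {m M : ℕ} (σ : Fin m → Fin m) (τ : Fin M → Fin M) : Prop :=
  Occurs σ τ ∧ ¬ ∃ g : Fin m → Fin M, StrictMono g ∧ (∀ p, τ (g p) = g (σ p)) ∧
    ∀ p, (g p : ℕ) ≠ M - 1 ∧ (τ (g p) : ℕ) ≠ M - 1

def ConnectedMatching {m : ℕ} (f : Fin m → Fin m) : Prop :=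
  0 < m ∧ ¬ ∃ h : ℕ, 0 < h ∧ h < m ∧ ∀ i : Fin m, ((i : ℕ) < h ↔ ((f i : ℕ) < h))

def HasCrossing {m : ℕ} (f : Fin m → Fin m) : Prop :=
  ∃ a b : Fin m, a < b ∧ b < f a ∧ f a < f b

def p1122 : Fin 4 → Fin 4 := ![1, 0, 3, 2]
def p1212 : Fin 4 → Fin 4 := ![2, 3, 0, 1]
def p1221 : Fin 4 → Fin 4 := ![3, 2, 1, 0]

section char
variable {M : ℕ} (f : Fin M → Fin M)

lemma crossing_g (a b : Fin M) (hf : Function.Involutive f)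
    (h1 : a < b) (h2 : b < f a) (h3 : f a < f b) :
    StrictMono (![a, b, f a, f b] : Fin 4 → Fin M) ∧
      ∀ p, f ((![a, b, f a, f b] : Fin 4 → Fin M) p) = ![a, b, f a, f b] (p1212 p) := by
  constructor
  · rw [Fin.strictMono_iff_lt_succ]
    intro i
    fin_cases i <;> simpa using by first | exact h1 | exact h2 | exact h3
  · intro p
    fin_cases p <;> simp [p1212, hf a, hf b]

lemma occurs_iff (hf : Function.Involutive f) : Occurs p1212 f ↔ HasCrossing f := by
  constructor
  · rintro ⟨g, hg, he⟩
    refine ⟨g 0, g 1, hg (by decide), ?_, ?_⟩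
    · have := he 0; simp [p1212] at this; rw [this]; exact hg (by decide)
    · have h0 := he 0; have h1 := he 1
      simp [p1212] at h0 h1; rw [h0, h1]; exact hg (by decide)
  · rintro ⟨a, b, h1, h2, h3⟩
    obtain ⟨hm, he⟩ := crossing_g f a b hf h1 h2 h3
    exact ⟨_, hm, he⟩

lemma minContains_iff (hf : Function.Involutive f) :
    MinContains p1212 f ↔ HasCrossing f ∧
      ∀ a b : Fin M, a < b → b < f a → f a < f b → (f b : ℕ) = M - 1 := by
  unfold MinContains
  rw [occurs_iff f hf]
  refine and_congr_right fun _ => ?_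
  rw [not_exists]
  constructor
  · intro h a b h1 h2 h3
    by_contra hne
    obtain ⟨hm, he⟩ := crossing_g f a b hf h1 h2 h3
    refine h _ ⟨hm, he, ?_⟩
    intro p
    have hb : (f b : ℕ) < M - 1 := by
      have := (f b).isLt; omega
    have hlt : ∀ q : Fin 4, ((![a, b, f a, f b] : Fin 4 → Fin M) q : ℕ) ≤ (f b : ℕ) := by
      intro q; fin_cases q <;> simp <;> omega
    constructor
    · have := hlt p; omega
    · rw [he p]; have := hlt (p1212 p); omega
  · rintro h g ⟨hm, he, hp⟩
    have h1 : g 0 < g 1 := hm (by decide)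
    have e0 := he 0; have e1 := he 1
    simp [p1212] at e0 e1
    have h2 : g 1 < f (g 0) := by rw [e0]; exact hm (by decide)
    have h3 : f (g 0) < f (g 1) := by rw [e0, e1]; exact hm (by decide)
    have := h _ _ h1 h2 h3
    have := (hp 1).2
    omega
end char


/-- gap `k` of a matching `g` on `2*m` points is under at least one arc. -/
def Covered {M : ℕ} (g : Fin M → Fin M) (k : Fin (M+1)) : Prop :=
  ∃ a : Fin M, (a : ℕ) < k ∧ (k : ℕ) ≤ g a

/-- order embedding of `Fin M` into `Fin (M+2)` skipping position `k` and `M+1`. -/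
def embF {M : ℕ} (k : Fin (M+1)) (x : Fin M) : Fin (M+2) :=
  ⟨if (x:ℕ) < k then x else x + 1, by have := x.isLt; split <;> omega⟩

lemma embF_strictMono {M : ℕ} (k : Fin (M+1)) : StrictMono (embF k) := by
  intro x y h
  simp only [embF, Fin.mk_lt_mk, Fin.lt_def] at *
  split <;> split <;> omega

lemma embF_lt_iff {M : ℕ} (k : Fin (M+1)) (x y : Fin M) :
    embF k x < embF k y ↔ x < y := (embF_strictMono k).lt_iff_lt

lemma embF_ne_k {M : ℕ} (k : Fin (M+1)) (x : Fin M) : (embF k x : ℕ) ≠ k := by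
  simp only [embF]; split <;> omega

lemma embF_ne_last {M : ℕ} (k : Fin (M+1)) (x : Fin M) : (embF k x : ℕ) ≠ M + 1 := by
  simp only [embF]; have := x.isLt; split <;> omega

/-- insert a new edge from position `k` to the new last position. -/
def insE {M : ℕ} (g : Fin M → Fin M) (k : Fin (M+1)) : Fin (M+2) → Fin (M+2) := fun j =>
  if _h1 : (j:ℕ) = k then ⟨M+1, by omega⟩
  else if _h2 : (j:ℕ) = M+1 then ⟨k, by have := k.isLt; omega⟩
  else
    embF k (g ⟨if (j:ℕ) < k then (j:ℕ) else (j:ℕ) - 1, by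
      have := j.isLt; have := k.isLt; split <;> omega⟩)

lemma insE_k {M : ℕ} (g : Fin M → Fin M) (k : Fin (M+1)) (j : Fin (M+2))
    (h : (j:ℕ) = k) : insE g k j = ⟨M+1, by omega⟩ := by
  simp [insE, h]

lemma insE_last {M : ℕ} (g : Fin M → Fin M) (k : Fin (M+1)) (j : Fin (M+2))
    (h : (j:ℕ) = M+1) : insE g k j = ⟨k, by have := k.isLt; omega⟩ := by
  have h' : ¬ ((j:ℕ) = (k:ℕ)) := by have := k.isLt; omega
  simp [insE, h, h']

lemma insE_emb {M : ℕ} (g : Fin M → Fin M) (k : Fin (M+1)) (x : Fin M) :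
    insE g k (embF k x) = embF k (g x) := by
  have h1 := embF_ne_k k x
  have h2 := embF_ne_last k x
  simp only [insE, h1, h2, dite_false, dif_neg]
  congr 2
  ext
  simp only [embF]
  split_ifs <;> omega

lemma embF_surj {M : ℕ} (k : Fin (M+1)) (j : Fin (M+2)) (h1 : (j:ℕ) ≠ k)
    (h2 : (j:ℕ) ≠ M+1) : ∃ x : Fin M, embF k x = j := by
  refine ⟨⟨if (j:ℕ) < k then j else j - 1, by have := j.isLt; have := k.isLt; split <;> omega⟩, ?_⟩
  ext
  simp only [embF]
  split_ifs <;> omega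

lemma insE_matching {M : ℕ} {g : Fin M → Fin M} (hg : IsMatching g) (k : Fin (M+1)) :
    IsMatching (insE g k) := by
  constructor
  · intro j
    rcases eq_or_ne (j:ℕ) (k:ℕ) with h | h
    · rw [insE_k g k j h]
      rw [insE_last g k _ rfl]
      exact Fin.ext h.symm
    rcases eq_or_ne (j:ℕ) (M+1) with h' | h'
    · rw [insE_last g k j h', insE_k g k _ rfl]
      exact Fin.ext h'.symm
    · obtain ⟨x, rfl⟩ := embF_surj k j h h'
      rw [insE_emb, insE_emb, hg.1]
  · intro j hj
    rcases eq_or_ne (j:ℕ) (k:ℕ) with h | h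
    · rw [insE_k g k j h] at hj
      have := k.isLt
      have hv := congrArg Fin.val hj
      simp at hv
      omega
    rcases eq_or_ne (j:ℕ) (M+1) with h' | h'
    · rw [insE_last g k j h'] at hj
      have hv := congrArg Fin.val hj
      simp at hv
      omega
    · obtain ⟨x, rfl⟩ := embF_surj k j h h'
      rw [insE_emb] at hj
      exact hg.2 x ((embF_strictMono k).injective hj)

lemma embF_le {M : ℕ} (k : Fin (M+1)) (x : Fin M) : (embF k x : ℕ) ≤ M := by
  have h1 := embF_ne_last k x
  have h2 := (embF k x).isLt
  omega

/-- every crossing of `insE g k` ends at the last vertex, provided `g` has no crossing. -/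
lemma insE_cross_end {M : ℕ} {g : Fin M → Fin M} (hg : IsMatching g)
    (hnc : ¬ HasCrossing g) (k : Fin (M+1)) :
    ∀ a b : Fin (M+2), a < b → b < insE g k a → insE g k a < insE g k b →
      ((insE g k b : ℕ)) = M + 1 := by
  intro a b h1 h2 h3
  by_contra hne
  have hia := (insE g k a).isLt
  have hib := (insE g k b).isLt
  have hbk : (b : ℕ) ≠ k := by
    intro h
    apply hne
    rw [insE_k g k b h]
  have hbl : (b : ℕ) ≠ M + 1 := by
    have hh : (b : ℕ) < (insE g k a : ℕ) := h2
    omega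
  have hak : (a : ℕ) ≠ k := by
    intro h
    have hh : (insE g k a : ℕ) < (insE g k b : ℕ) := h3
    rw [insE_k g k a h] at hh
    simp at hh
    omega
  have hal : (a : ℕ) ≠ M + 1 := by
    have hh : (a : ℕ) < (b : ℕ) := h1
    omega
  obtain ⟨x, rfl⟩ := embF_surj k a hak hal
  obtain ⟨y, rfl⟩ := embF_surj k b hbk hbl
  rw [insE_emb] at h2 h3
  rw [insE_emb] at h3
  exact hnc ⟨x, y, (embF_lt_iff k x y).mp h1, (embF_lt_iff k y (g x)).mp h2,
    (embF_lt_iff k (g x) (g y)).mp h3⟩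

lemma insE_hasCrossing {M : ℕ} (g : Fin M → Fin M) (k : Fin (M+1))
    (hcov : Covered g k) : HasCrossing (insE g k) := by
  obtain ⟨a, ha1, ha2⟩ := hcov
  have hk2 : (k : ℕ) < M + 2 := by have := k.isLt; omega
  refine ⟨embF k a, ⟨k, hk2⟩, ?_, ?_, ?_⟩
  · show (embF k a : ℕ) < (k : ℕ)
    simp only [embF]
    split <;> omega
  · rw [insE_emb]
    show (k : ℕ) < (embF k (g a) : ℕ)
    simp only [embF]
    split <;> omega
  · rw [insE_emb, insE_k g k _ rfl]
    show (embF k (g a) : ℕ) < M + 1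
    have h1 := embF_ne_last k (g a)
    have h2 := (embF k (g a)).isLt
    omega

/-- delete the vertex `k` and the last vertex. -/
def delE {M : ℕ} (f : Fin (M+2) → Fin (M+2)) (k : Fin (M+1)) : Fin M → Fin M := fun x =>
  ⟨min (if (f (embF k x) : ℕ) < k then (f (embF k x) : ℕ) else (f (embF k x) : ℕ) - 1) (M-1),
    by have := x.isLt; omega⟩

lemma embF_delE {M : ℕ} (f : Fin (M+2) → Fin (M+2)) (k : Fin (M+1)) (x : Fin M)
    (h1 : (f (embF k x) : ℕ) ≠ k) (h2 : (f (embF k x) : ℕ) ≠ M+1) :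
    embF k (delE f k x) = f (embF k x) := by
  have hvv := (f (embF k x)).isLt
  have hk := k.isLt
  have hd : (delE f k x : ℕ) =
      if (f (embF k x) : ℕ) < k then (f (embF k x) : ℕ) else (f (embF k x) : ℕ) - 1 := by
    simp only [delE]
    split_ifs <;> omega
  ext
  rw [show ((embF k (delE f k x)) : ℕ) =
    if ((delE f k x) : ℕ) < (k : ℕ) then ((delE f k x) : ℕ) else ((delE f k x) : ℕ) + 1 from rfl]
  rw [hd]
  split_ifs <;> omega


theorem card_S (m : ℕ) :
    Nat.card {f : Fin (2*m+2) → Fin (2*m+2) // IsMatching f ∧ MinContains p1212 f} =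
      Nat.card {q : (Fin (2*m) → Fin (2*m)) × Fin (2*m+1) //
        (IsMatching q.1 ∧ ¬ HasCrossing q.1) ∧ Covered q.1 q.2} := by
  symm
  apply Nat.card_congr
  have key : ∀ q : {q : (Fin (2*m) → Fin (2*m)) × Fin (2*m+1) //
      (IsMatching q.1 ∧ ¬ HasCrossing q.1) ∧ Covered q.1 q.2},
      IsMatching (insE q.1.1 q.1.2) ∧ MinContains p1212 (insE q.1.1 q.1.2) := by
    rintro ⟨⟨g, k⟩, ⟨⟨hm, hnc⟩, hcov⟩⟩
    have hmatch := insE_matching hm k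
    refine ⟨hmatch, ?_⟩
    rw [minContains_iff _ hmatch.1]
    refine ⟨insE_hasCrossing g k hcov, ?_⟩
    intro a b h1 h2 h3
    have := insE_cross_end hm hnc k a b h1 h2 h3
    omega
  refine Equiv.ofBijective (fun q => ⟨insE q.1.1 q.1.2, key q⟩) ⟨?_, ?_⟩
  · rintro ⟨⟨g, k⟩, hq⟩ ⟨⟨g', k'⟩, hq'⟩ h
    simp only [Subtype.mk.injEq] at h
    have e1 := congrFun h ⟨2*m+1, by omega⟩
    rw [insE_last g k _ rfl, insE_last g' k' _ rfl] at e1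
    have hk : k = k' := by
      have := congrArg Fin.val e1
      simp only [Fin.val_mk] at this
      exact Fin.ext this
    subst hk
    have hgg : g = g' := by
      funext x
      have e2 := congrFun h (embF k x)
      rw [insE_emb, insE_emb] at e2
      exact (embF_strictMono k).injective e2
    simp [hgg]
  · rintro ⟨f, hm, hmc⟩
    rw [minContains_iff _ hm.1] at hmc
    obtain ⟨hcr, hend⟩ := hmc
    have hlast : ∀ a b : Fin (2*m+2), a < b → b < f a → f a < f b → (f b : ℕ) = 2*m+1 := by
      intro a b h1 h2 h3
      have := hend a b h1 h2 h3
      omega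
    have hL : (⟨2*m+1, by omega⟩ : Fin (2*m+2)) = ⟨2*m+1, by omega⟩ := rfl
    set L : Fin (2*m+2) := ⟨2*m+1, by omega⟩ with hLdef
    have hkb : (f L : ℕ) < 2*m+1 := by
      have h1 := (f L).isLt
      have h2 : (f L : ℕ) ≠ 2*m+1 := by
        intro h
        exact hm.2 L (Fin.ext h)
      omega
    set k : Fin (2*m+1) := ⟨(f L : ℕ), hkb⟩ with hkdef
    set K : Fin (2*m+2) := ⟨(k : ℕ), by omega⟩ with hKdef
    have hKfL : K = f L := Fin.ext rfl
    have hfK : f K = L := by rw [hKfL, hm.1]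
    have h1 : ∀ x : Fin (2*m), (f (embF k x) : ℕ) ≠ (k : ℕ) := by
      intro x h
      have : f (embF k x) = K := Fin.ext h
      have h2 : embF k x = f K := by rw [← this, hm.1]
      rw [hfK] at h2
      exact embF_ne_last k x (congrArg Fin.val h2)
    have h2 : ∀ x : Fin (2*m), (f (embF k x) : ℕ) ≠ 2*m+1 := by
      intro x h
      have : f (embF k x) = L := Fin.ext h
      have h3 : embF k x = f L := by rw [← this, hm.1]
      rw [← hKfL] at h3
      exact embF_ne_k k x (congrArg Fin.val h3)
    set g : Fin (2*m) → Fin (2*m) := delE f k with hgdef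
    have hde : ∀ x, embF k (g x) = f (embF k x) := fun x => embF_delE f k x (h1 x) (h2 x)
    have hginv : Function.Involutive g := by
      intro x
      apply (embF_strictMono k).injective
      rw [hde (g x), hde x, hm.1]
    have hgne : ∀ x, g x ≠ x := by
      intro x h
      apply hm.2 (embF k x)
      rw [← hde x, h]
    have hgnc : ¬ HasCrossing g := by
      rintro ⟨x, y, c1, c2, c3⟩
      apply h2 y
      refine hlast (embF k x) (embF k y) ((embF_lt_iff k x y).mpr c1) ?_ ?_
      · rw [← hde x]
        exact (embF_lt_iff k y (g x)).mpr c2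
      · rw [← hde x, ← hde y]
        exact (embF_lt_iff k (g x) (g y)).mpr c3
    have hgcov : Covered g k := by
      obtain ⟨a, b, c1, c2, c3⟩ := hcr
      have hb := hlast a b c1 c2 c3
      have hfb : f b = L := Fin.ext hb
      have hbv : b = f L := by rw [← hfb, hm.1]
      have hbk : (b : ℕ) = (k : ℕ) := by rw [hbv]
      have hak : (a : ℕ) < (k : ℕ) := by
        have : (a : ℕ) < (b : ℕ) := c1
        omega
      have han : (a : ℕ) ≠ (k : ℕ) := by omega
      have hal : (a : ℕ) ≠ 2*m+1 := by have := k.isLt; omega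
      obtain ⟨x, rfl⟩ := embF_surj k a han hal
      have hx : (x : ℕ) < (k : ℕ) := by
        revert hak
        simp only [embF]
        split <;> omega
      refine ⟨x, hx, ?_⟩
      have hc2 : (b : ℕ) < (f (embF k x) : ℕ) := c2
      rw [← hde x] at hc2
      revert hc2
      simp only [embF]
      split <;> omega
    refine ⟨⟨⟨g, k⟩, ⟨⟨hginv, hgne⟩, hgnc⟩, hgcov⟩, ?_⟩
    apply Subtype.ext
    show insE g k = f
    funext j
    rcases eq_or_ne (j : ℕ) (k : ℕ) with h | h
    · rw [insE_k g k j h]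
      have : j = K := Fin.ext h
      rw [this, hfK]
    rcases eq_or_ne (j : ℕ) (2*m+1) with h' | h'
    · rw [insE_last g k j h']
      have : j = L := Fin.ext h'
      rw [this, ← hKfL]
    · obtain ⟨x, rfl⟩ := embF_surj k j h h'
      rw [insE_emb, hde x]

lemma even_card_of_invol {α : Type*} [DecidableEq α] [LinearOrder α] (f : α → α)
    (hinv : ∀ a, f (f a) = a) (s : Finset α) (hcl : ∀ a ∈ s, f a ∈ s)
    (hne : ∀ a ∈ s, f a ≠ a) : Even s.card := by
  classical
  have hsplit : s.card = (s.filter (fun a => a < f a)).card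
      + (s.filter (fun a => ¬ a < f a)).card :=
    (Finset.card_filter_add_card_filter_not _).symm
  have heq : s.filter (fun a => ¬ a < f a) = s.filter (fun a => f a < a) := by
    apply Finset.filter_congr
    intro a ha
    have := hne a ha
    simp only [not_lt, eq_iff_iff]
    constructor
    · intro hle
      exact lt_of_le_of_ne hle this
    · intro hlt
      exact le_of_lt hlt
  have hcard : (s.filter (fun a => a < f a)).card = (s.filter (fun a => f a < a)).card := by
    apply Finset.card_bij' (fun a _ => f a) (fun a _ => f a)
    · intro a ha
      simp only [Finset.mem_filter] at ha ⊢
      exact ⟨hcl a ha.1, by rw [hinv]; exact ha.2⟩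
    · intro a ha
      simp only [Finset.mem_filter] at ha ⊢
      exact ⟨hcl a ha.1, by rw [hinv]; exact ha.2⟩
    · intro a _; exact hinv a
    · intro a _; exact hinv a
  rw [hsplit, heq, ← hcard]
  exact ⟨_, rfl⟩

/-- if an initial segment is closed under a matching, it has even size. -/
lemma closure_even {A : ℕ} {f : Fin A → Fin A} (hm : IsMatching f) (k : ℕ) (hk : k ≤ A)
    (hcl : ∀ a : Fin A, (a : ℕ) < k → (f a : ℕ) < k) : Even k := by
  classical
  have hcard : (Finset.univ.filter (fun a : Fin A => (a : ℕ) < k)).card = k := by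
    rcases Nat.eq_or_lt_of_le hk with h | h
    · subst h
      simp only [Fin.is_lt, Finset.filter_true_of_mem, Finset.mem_univ, forall_const]
      simp
    · have : Finset.univ.filter (fun a : Fin A => (a : ℕ) < k) = Finset.Iio ⟨k, h⟩ := by
        ext a
        simp [Fin.lt_def]
      rw [this, Fin.card_Iio]
  rw [← hcard]
  apply even_card_of_invol f hm.1
  · intro a ha
    simp only [Finset.mem_filter, Finset.mem_univ, true_and] at ha ⊢
    exact hcl a ha
  · intro a ha
    exact hm.2 a

section pJm
variable {i m : ℕ}

def embL (hi : i ≤ m) (x : Fin (2*i)) : Fin (2*m) := ⟨x, by have := x.isLt; omega⟩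
def embR (hi : i ≤ m) (y : Fin (2*(m-i))) : Fin (2*m) :=
  ⟨(y : ℕ) + 2*i, by have := y.isLt; omega⟩

def pJm (hi : i ≤ m) (g : Fin (2*i) → Fin (2*i)) (h : Fin (2*(m-i)) → Fin (2*(m-i))) :
    Fin (2*m) → Fin (2*m) := fun j =>
  if hj : (j : ℕ) < 2*i then embL hi (g ⟨j, hj⟩)
  else embR hi (h ⟨(j : ℕ) - 2*i, by have := j.isLt; omega⟩)

variable {hi : i ≤ m} {g : Fin (2*i) → Fin (2*i)} {h : Fin (2*(m-i)) → Fin (2*(m-i))}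

lemma pJm_embL (x : Fin (2*i)) : pJm hi g h (embL hi x) = embL hi (g x) := by
  have hx : ((embL hi x : Fin (2*m)) : ℕ) < 2*i := x.isLt
  simp only [pJm, dif_pos hx]
  congr 1

lemma pJm_embR (y : Fin (2*(m-i))) : pJm hi g h (embR hi y) = embR hi (h y) := by
  have hy : ¬ ((embR hi y : Fin (2*m)) : ℕ) < 2*i := by
    show ¬ (y : ℕ) + 2*i < 2*i
    omega
  simp only [pJm, dif_neg hy]
  have he : ((embR hi y : Fin (2*m)) : ℕ) = (y : ℕ) + 2*i := rfl
  congr 1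
  congr 1
  ext
  simp only [Fin.val_mk]
  omega

lemma emb_cases (hi : i ≤ m) (j : Fin (2*m)) :
    (∃ x, j = embL hi x) ∨ (∃ y, j = embR hi y) := by
  rcases Nat.lt_or_ge (j : ℕ) (2*i) with hj | hj
  · exact Or.inl ⟨⟨j, hj⟩, Fin.ext rfl⟩
  · refine Or.inr ⟨⟨(j : ℕ) - 2*i, by have := j.isLt; omega⟩, Fin.ext ?_⟩
    show (j : ℕ) = (j : ℕ) - 2*i + 2*i
    omega

lemma embL_inj : Function.Injective (embL (m := m) hi) := by
  intro x y hxy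
  have h1 := congrArg Fin.val hxy
  have h2 : (x : ℕ) = (y : ℕ) := h1
  exact Fin.ext h2

lemma embR_inj : Function.Injective (embR (m := m) hi) := by
  intro x y hxy
  have := congrArg Fin.val hxy
  simp only [embR] at this
  exact Fin.ext (by omega)

lemma pJm_matching (hg : IsMatching g) (hh : IsMatching h) : IsMatching (pJm hi g h) := by
  constructor
  · intro j
    rcases emb_cases hi j with ⟨x, rfl⟩ | ⟨y, rfl⟩
    · rw [pJm_embL, pJm_embL, hg.1]
    · rw [pJm_embR, pJm_embR, hh.1]
  · intro j hj
    rcases emb_cases hi j with ⟨x, rfl⟩ | ⟨y, rfl⟩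
    · rw [pJm_embL] at hj
      exact hg.2 x (embL_inj hj)
    · rw [pJm_embR] at hj
      exact hh.2 y (embR_inj hj)

lemma pJm_nc (hg : ¬ HasCrossing g) (hh : ¬ HasCrossing h) : ¬ HasCrossing (pJm hi g h) := by
  rintro ⟨a, b, c1, c2, c3⟩
  rcases emb_cases hi a with ⟨x, rfl⟩ | ⟨x, rfl⟩
  · rw [pJm_embL] at c2 c3
    rcases emb_cases hi b with ⟨y, rfl⟩ | ⟨y, rfl⟩
    · rw [pJm_embL] at c3
      exact hg ⟨x, y, c1, c2, c3⟩
    · exfalso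
      have h2 : ((embR hi y : Fin (2*m)) : ℕ) < ((embL hi (g x) : Fin (2*m)) : ℕ) := c2
      have : (y : ℕ) + 2*i < (g x : ℕ) := h2
      have := (g x).isLt
      omega
  · rw [pJm_embR] at c2 c3
    rcases emb_cases hi b with ⟨y, rfl⟩ | ⟨y, rfl⟩
    · exfalso
      have h1 : ((embR hi x : Fin (2*m)) : ℕ) < ((embL hi y : Fin (2*m)) : ℕ) := c1
      have : (x : ℕ) + 2*i < (y : ℕ) := h1
      have := y.isLt
      omega
    · rw [pJm_embR] at c3
      refine hh ⟨x, y, ?_, ?_, ?_⟩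
      · have h1 : (x : ℕ) + 2*i < (y : ℕ) + 2*i := c1
        exact (by omega : (x:ℕ) < (y:ℕ))
      · have h2 : (y : ℕ) + 2*i < (h x : ℕ) + 2*i := c2
        exact (by omega : (y:ℕ) < ((h x):ℕ))
      · have h3 : (h x : ℕ) + 2*i < (h y : ℕ) + 2*i := c3
        exact (by omega : ((h x):ℕ) < ((h y):ℕ))
end pJm

section pJmExtract
variable {i m : ℕ}

lemma pJm_notCovered (hi : i ≤ m) (g : Fin (2*i) → Fin (2*i))
    (h : Fin (2*(m-i)) → Fin (2*(m-i))) :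
    ¬ Covered (pJm hi g h) ⟨2*i, by omega⟩ := by
  rintro ⟨a, ha1, ha2⟩
  simp only [Fin.val_mk] at ha1 ha2
  rcases emb_cases hi a with ⟨x, rfl⟩ | ⟨y, rfl⟩
  · rw [pJm_embL] at ha2
    have h1 : ((embL hi (g x) : Fin (2*m)) : ℕ) = ((g x) : ℕ) := rfl
    have := (g x).isLt
    omega
  · have h1 : ((embR hi y : Fin (2*m)) : ℕ) = (y : ℕ) + 2*i := rfl
    omega

variable (hi : i ≤ m) (f : Fin (2*m) → Fin (2*m))

def exL : Fin (2*i) → Fin (2*i) := fun x =>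
  ⟨min ((f (embL hi x) : ℕ)) (2*i-1), by have := x.isLt; omega⟩

def exR : Fin (2*(m-i)) → Fin (2*(m-i)) := fun y =>
  ⟨min ((f (embR hi y) : ℕ) - 2*i) (2*(m-i)-1), by have := y.isLt; omega⟩

variable {f}

lemma embL_exL (hcl : ∀ a : Fin (2*m), (a : ℕ) < 2*i → (f a : ℕ) < 2*i) (x : Fin (2*i)) : embL hi (exL hi f x) = f (embL hi x) := by
  have hpt : (f (embL hi x) : ℕ) < 2*i := hcl _ x.isLt
  have hx := x.isLt
  ext
  show min ((f (embL hi x) : ℕ)) (2*i-1) = (f (embL hi x) : ℕ)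
  omega

lemma right_closed (hcl : ∀ a : Fin (2*m), (a : ℕ) < 2*i → (f a : ℕ) < 2*i)
    (hm : IsMatching f) : ∀ a : Fin (2*m), 2*i ≤ (a : ℕ) → 2*i ≤ (f a : ℕ) := by
  intro a ha
  by_contra hlt
  have h2 := hcl (f a) (by omega)
  rw [hm.1] at h2
  omega

lemma embR_exR (hcl : ∀ a : Fin (2*m), (a : ℕ) < 2*i → (f a : ℕ) < 2*i) (hm : IsMatching f) (y : Fin (2*(m-i))) : embR hi (exR hi f y) = f (embR hi y) := by
  have hpt : 2*i ≤ (f (embR hi y) : ℕ) :=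
    right_closed hcl hm _ (by show 2*i ≤ (y : ℕ) + 2*i; omega)
  have hy := (f (embR hi y)).isLt
  ext
  show min ((f (embR hi y) : ℕ) - 2*i) (2*(m-i)-1) + 2*i = (f (embR hi y) : ℕ)
  omega

lemma pJm_recon (hcl : ∀ a : Fin (2*m), (a : ℕ) < 2*i → (f a : ℕ) < 2*i) (hm : IsMatching f) : f = pJm hi (exL hi f) (exR hi f) := by
  funext j
  rcases emb_cases hi j with ⟨x, rfl⟩ | ⟨y, rfl⟩
  · rw [pJm_embL, embL_exL hi hcl]
  · rw [pJm_embR, embR_exR hi hcl hm]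

lemma exL_matching (hcl : ∀ a : Fin (2*m), (a : ℕ) < 2*i → (f a : ℕ) < 2*i) (hm : IsMatching f) : IsMatching (exL hi f) := by
  constructor
  · intro x
    apply embL_inj
    rw [embL_exL hi hcl, embL_exL hi hcl, hm.1]
  · intro x hx
    apply hm.2 (embL hi x)
    rw [← embL_exL hi hcl x, hx]

lemma exR_matching (hcl : ∀ a : Fin (2*m), (a : ℕ) < 2*i → (f a : ℕ) < 2*i) (hm : IsMatching f) : IsMatching (exR hi f) := by
  constructor
  · intro y
    apply embR_inj
    rw [embR_exR hi hcl hm, embR_exR hi hcl hm, hm.1]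
  · intro y hy
    apply hm.2 (embR hi y)
    rw [← embR_exR hi hcl hm y, hy]

lemma exL_nc (hcl : ∀ a : Fin (2*m), (a : ℕ) < 2*i → (f a : ℕ) < 2*i) (hm : IsMatching f) (hnc : ¬ HasCrossing f) : ¬ HasCrossing (exL hi f) := by
  rintro ⟨x, y, c1, c2, c3⟩
  refine hnc ⟨embL hi x, embL hi y, c1, ?_, ?_⟩
  · rw [← embL_exL hi hcl x]
    exact c2
  · rw [← embL_exL hi hcl x, ← embL_exL hi hcl y]
    exact c3

lemma exR_nc (hcl : ∀ a : Fin (2*m), (a : ℕ) < 2*i → (f a : ℕ) < 2*i) (hm : IsMatching f) (hnc : ¬ HasCrossing f) : ¬ HasCrossing (exR hi f) := by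
  rintro ⟨x, y, c1, c2, c3⟩
  refine hnc ⟨embR hi x, embR hi y, ?_, ?_, ?_⟩
  · show (x : ℕ) + 2*i < (y : ℕ) + 2*i
    have : (x : ℕ) < (y : ℕ) := c1
    omega
  · rw [← embR_exR hi hcl hm x]
    show (y : ℕ) + 2*i < ((embR hi (exR hi f x) : Fin (2*m)) : ℕ)
    have h1 : (y : ℕ) < (exR hi f x : ℕ) := c2
    have h2 := congrArg Fin.val (embR_exR hi hcl hm x)
    have h3 : ((embR hi (exR hi f x) : Fin (2*m)) : ℕ) = (exR hi f x : ℕ) + 2*i := rfl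
    omega
  · rw [← embR_exR hi hcl hm x, ← embR_exR hi hcl hm y]
    show ((embR hi (exR hi f x) : Fin (2*m)) : ℕ) < ((embR hi (exR hi f y) : Fin (2*m)) : ℕ)
    have h1 : (exR hi f x : ℕ) < (exR hi f y : ℕ) := c3
    have h2 := congrArg Fin.val (embR_exR hi hcl hm x)
    have h3 := congrArg Fin.val (embR_exR hi hcl hm y)
    have h4 : ((embR hi (exR hi f x) : Fin (2*m)) : ℕ) = (exR hi f x : ℕ) + 2*i := rfl
    have h5 : ((embR hi (exR hi f y) : Fin (2*m)) : ℕ) = (exR hi f y : ℕ) + 2*i := rfl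
    omega

end pJmExtract

section aJm
variable {i m : ℕ}

def embI (hi : i ≤ m) (x : Fin (2*i)) : Fin (2*(m+1)) :=
  ⟨(x : ℕ) + 1, by have := x.isLt; omega⟩
def embO (hi : i ≤ m) (y : Fin (2*(m-i))) : Fin (2*(m+1)) :=
  ⟨(y : ℕ) + (2*i+2), by have := y.isLt; omega⟩

def aJm (hi : i ≤ m) (g : Fin (2*i) → Fin (2*i)) (h : Fin (2*(m-i)) → Fin (2*(m-i))) :
    Fin (2*(m+1)) → Fin (2*(m+1)) := fun j =>
  if _h0 : (j : ℕ) = 0 then ⟨2*i+1, by omega⟩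
  else if _ht : (j : ℕ) = 2*i+1 then ⟨0, by omega⟩
  else if hj : (j : ℕ) < 2*i+1 then embI hi (g ⟨(j : ℕ) - 1, by omega⟩)
  else embO hi (h ⟨(j : ℕ) - (2*i+2), by have := j.isLt; omega⟩)

variable {hi : i ≤ m} {g : Fin (2*i) → Fin (2*i)} {h : Fin (2*(m-i)) → Fin (2*(m-i))}

lemma aJm_zero (j : Fin (2*(m+1))) (hj : (j : ℕ) = 0) :
    aJm hi g h j = ⟨2*i+1, by omega⟩ := by simp [aJm, hj]

lemma aJm_top (j : Fin (2*(m+1))) (hj : (j : ℕ) = 2*i+1) :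
    aJm hi g h j = ⟨0, by omega⟩ := by
  have h0 : (j : ℕ) ≠ 0 := by omega
  simp [aJm, hj, h0]

lemma aJm_embI (x : Fin (2*i)) : aJm hi g h (embI hi x) = embI hi (g x) := by
  have hv : ((embI hi x : Fin (2*(m+1))) : ℕ) = (x : ℕ) + 1 := rfl
  have hx := x.isLt
  have h0 : ((embI hi x : Fin (2*(m+1))) : ℕ) ≠ 0 := by omega
  have ht : ((embI hi x : Fin (2*(m+1))) : ℕ) ≠ 2*i+1 := by omega
  have hj : ((embI hi x : Fin (2*(m+1))) : ℕ) < 2*i+1 := by omega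
  simp only [aJm, dif_neg h0, dif_neg ht, dif_pos hj]
  refine congrArg _ (congrArg g (Fin.ext ?_))
  simp only [Fin.val_mk]
  omega

lemma aJm_embO (y : Fin (2*(m-i))) : aJm hi g h (embO hi y) = embO hi (h y) := by
  have hv : ((embO hi y : Fin (2*(m+1))) : ℕ) = (y : ℕ) + (2*i+2) := rfl
  have h0 : ((embO hi y : Fin (2*(m+1))) : ℕ) ≠ 0 := by omega
  have ht : ((embO hi y : Fin (2*(m+1))) : ℕ) ≠ 2*i+1 := by omega
  have hj : ¬ ((embO hi y : Fin (2*(m+1))) : ℕ) < 2*i+1 := by omega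
  simp only [aJm, dif_neg h0, dif_neg ht, dif_neg hj]
  refine congrArg _ (congrArg h (Fin.ext ?_))
  simp only [Fin.val_mk]
  omega

lemma aJm_cases (hi : i ≤ m) (j : Fin (2*(m+1))) :
    (j : ℕ) = 0 ∨ (j : ℕ) = 2*i+1 ∨ (∃ x, j = embI hi x) ∨ (∃ y, j = embO hi y) := by
  rcases Nat.eq_or_lt_of_le (Nat.zero_le (j : ℕ)) with h0 | h0
  · exact Or.inl h0.symm
  rcases eq_or_ne ((j : ℕ)) (2*i+1) with ht | ht
  · exact Or.inr (Or.inl ht)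
  rcases Nat.lt_or_ge ((j : ℕ)) (2*i+1) with hj | hj
  · exact Or.inr (Or.inr (Or.inl ⟨⟨(j : ℕ) - 1, by omega⟩, Fin.ext (by
      show (j : ℕ) = (j : ℕ) - 1 + 1; omega)⟩))
  · exact Or.inr (Or.inr (Or.inr ⟨⟨(j : ℕ) - (2*i+2), by have := j.isLt; omega⟩, Fin.ext (by
      show (j : ℕ) = (j : ℕ) - (2*i+2) + (2*i+2); omega)⟩))

lemma embI_inj : Function.Injective (embI (m := m) hi) := by
  intro x y hxy
  have h1 : (x : ℕ) + 1 = (y : ℕ) + 1 := congrArg Fin.val hxy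
  exact Fin.ext (by omega)

lemma embO_inj : Function.Injective (embO (m := m) hi) := by
  intro x y hxy
  have h1 : (x : ℕ) + (2*i+2) = (y : ℕ) + (2*i+2) := congrArg Fin.val hxy
  exact Fin.ext (by omega)

lemma aJm_matching (hg : IsMatching g) (hh : IsMatching h) : IsMatching (aJm hi g h) := by
  have hZ : ((⟨0, by omega⟩ : Fin (2*(m+1))) : ℕ) = 0 := rfl
  have hT : ((⟨2*i+1, by omega⟩ : Fin (2*(m+1))) : ℕ) = 2*i+1 := rfl
  constructor
  · intro j
    rcases aJm_cases hi j with h0 | ht | ⟨x, rfl⟩ | ⟨y, rfl⟩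
    · rw [aJm_zero _ h0, aJm_top _ hT]
      exact Fin.ext h0.symm
    · rw [aJm_top _ ht, aJm_zero _ hZ]
      exact Fin.ext ht.symm
    · rw [aJm_embI, aJm_embI, hg.1]
    · rw [aJm_embO, aJm_embO, hh.1]
  · intro j hj
    rcases aJm_cases hi j with h0 | ht | ⟨x, rfl⟩ | ⟨y, rfl⟩
    · rw [aJm_zero _ h0] at hj
      have := congrArg Fin.val hj
      omega
    · rw [aJm_top _ ht] at hj
      have := congrArg Fin.val hj
      omega
    · rw [aJm_embI] at hj
      exact hg.2 x (embI_inj hj)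
    · rw [aJm_embO] at hj
      exact hh.2 y (embO_inj hj)

lemma aJm_nc (hg : ¬ HasCrossing g) (hh : ¬ HasCrossing h) : ¬ HasCrossing (aJm hi g h) := by
  rintro ⟨a, b, c1, c2, c3⟩
  have hva : (a : ℕ) < (b : ℕ) := c1
  have hIv : ∀ x : Fin (2*i), ((embI hi x : Fin (2*(m+1))) : ℕ) = (x : ℕ) + 1 := fun _ => rfl
  have hOv : ∀ y : Fin (2*(m-i)), ((embO hi y : Fin (2*(m+1))) : ℕ) = (y : ℕ) + (2*i+2) :=
    fun _ => rfl
  rcases aJm_cases hi a with h0 | ht | ⟨x, rfl⟩ | ⟨x, rfl⟩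
  · -- a = 0 : f a = top, f b must be bigger: impossible unless  f b ≤ 2m+1...
    rw [aJm_zero _ h0] at c2 c3
    have hb2 : (b : ℕ) < 2*i+1 := c2
    have hb0 : (b : ℕ) ≠ 0 := by omega
    have hbt : (b : ℕ) ≠ 2*i+1 := by omega
    rcases aJm_cases hi b with g0 | gt | ⟨y, rfl⟩ | ⟨y, rfl⟩
    · omega
    · omega
    · rw [aJm_embI] at c3
      have : (2*i+1 : ℕ) < ((g y : ℕ) + 1) := c3
      have := (g y).isLt
      omega
    · have := hOv y
      omega
  · rw [aJm_top _ ht] at c2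
    have : (b : ℕ) < 0 := c2
    omega
  · rw [aJm_embI] at c2 c3
    have hfa : ((embI hi (g x) : Fin (2*(m+1))) : ℕ) = (g x : ℕ) + 1 := rfl
    have hb2 : (b : ℕ) < (g x : ℕ) + 1 := c2
    have hgx := (g x).isLt
    have hb0 : (b : ℕ) ≠ 0 := by omega
    have hbt : (b : ℕ) ≠ 2*i+1 := by omega
    rcases aJm_cases hi b with g0 | gt | ⟨y, rfl⟩ | ⟨y, rfl⟩
    · omega
    · omega
    · rw [aJm_embI] at c3
      refine hg ⟨x, y, ?_, ?_, ?_⟩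
      · have : (x : ℕ) + 1 < (y : ℕ) + 1 := c1
        exact (by omega : (x : ℕ) < (y : ℕ))
      · have : (y : ℕ) + 1 < (g x : ℕ) + 1 := c2
        exact (by omega : (y : ℕ) < ((g x) : ℕ))
      · have : (g x : ℕ) + 1 < (g y : ℕ) + 1 := c3
        exact (by omega : ((g x) : ℕ) < ((g y) : ℕ))
    · have := hOv y
      omega
  · rw [aJm_embO] at c2 c3
    have hfa : ((embO hi (h x) : Fin (2*(m+1))) : ℕ) = (h x : ℕ) + (2*i+2) := rfl
    have hx := hOv x
    have hb2 : (b : ℕ) < (h x : ℕ) + (2*i+2) := c2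
    have hb1 : (x : ℕ) + (2*i+2) < (b : ℕ) := c1
    have hb0 : (b : ℕ) ≠ 0 := by omega
    have hbt : (b : ℕ) ≠ 2*i+1 := by omega
    rcases aJm_cases hi b with g0 | gt | ⟨y, rfl⟩ | ⟨y, rfl⟩
    · omega
    · omega
    · have := hIv y
      have := y.isLt
      omega
    · rw [aJm_embO] at c3
      refine hh ⟨x, y, ?_, ?_, ?_⟩
      · have : (x : ℕ) + (2*i+2) < (y : ℕ) + (2*i+2) := c1
        exact (by omega : (x : ℕ) < (y : ℕ))
      · have : (y : ℕ) + (2*i+2) < (h x : ℕ) + (2*i+2) := c2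
        exact (by omega : (y : ℕ) < ((h x) : ℕ))
      · have : (h x : ℕ) + (2*i+2) < (h y : ℕ) + (2*i+2) := c3
        exact (by omega : ((h x) : ℕ) < ((h y) : ℕ))
end aJm

section aJmExtract
variable {i m : ℕ}

lemma arc_decomp (f : Fin (2*(m+1)) → Fin (2*(m+1))) (hm : IsMatching f)
    (hnc : ¬ HasCrossing f) :
    ∃ i : ℕ, i ≤ m ∧ (f ⟨0, by omega⟩ : ℕ) = 2*i+1 ∧
      (∀ a : Fin (2*(m+1)), 0 < (a : ℕ) → (a : ℕ) < 2*i+1 →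
        0 < (f a : ℕ) ∧ (f a : ℕ) < 2*i+1) ∧
      (∀ a : Fin (2*(m+1)), 2*i+1 < (a : ℕ) → 2*i+1 < (f a : ℕ)) := by
  set Z : Fin (2*(m+1)) := ⟨0, by omega⟩ with hZ
  have h0 : 0 < (f Z : ℕ) := by
    have := hm.2 Z
    have hne : (f Z : ℕ) ≠ (Z : ℕ) := fun h => this (Fin.ext h)
    have : (Z : ℕ) = 0 := rfl
    omega
  have hin : ∀ a : Fin (2*(m+1)), 0 < (a : ℕ) → (a : ℕ) < (f Z : ℕ) →
      0 < (f a : ℕ) ∧ (f a : ℕ) < (f Z : ℕ) := by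
    intro a ha1 ha2
    constructor
    · rcases Nat.eq_zero_or_pos (f a : ℕ) with h | h
      swap
      · exact h
      exfalso
      have h2 : f a = Z := Fin.ext h
      have h3 : a = f Z := by rw [← h2, hm.1]
      have := congrArg Fin.val h3
      omega
    · by_contra hge
      push_neg at hge
      have hne : f a ≠ f Z := by
        intro h
        have h4 := congrArg Fin.val (hm.1.injective h)
        have hZ0 : (Z : ℕ) = 0 := rfl
        omega
      have hlt : (f Z : ℕ) < (f a : ℕ) := by
        rcases Nat.eq_or_lt_of_le hge with h | h
        · exact absurd (Fin.ext h.symm) hne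
        · exact h
      exact hnc ⟨Z, a, ha1, ha2, hlt⟩
  have heven : Even ((f Z : ℕ) - 1) := by
    have hcard : (Finset.Ioo Z (f Z)).card = (f Z : ℕ) - 1 := by
      rw [Fin.card_Ioo]
      have : (Z : ℕ) = 0 := rfl
      omega
    rw [← hcard]
    apply even_card_of_invol f hm.1
    · intro a ha
      rw [Finset.mem_Ioo] at ha ⊢
      have h1 : 0 < (a : ℕ) := ha.1
      have h2 : (a : ℕ) < (f Z : ℕ) := ha.2
      obtain ⟨h3, h4⟩ := hin a h1 h2
      exact ⟨h3, h4⟩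
    · intro a _
      exact hm.2 a
  obtain ⟨t, ht⟩ := heven
  have hfZlt := (f Z).isLt
  refine ⟨t, by omega, by omega, ?_, ?_⟩
  · intro a ha1 ha2
    have := hin a ha1 (by omega)
    omega
  · intro a ha
    have hane : (f a : ℕ) ≠ 0 := by
      intro h
      have h2 : f a = Z := Fin.ext h
      have h3 : a = f Z := by rw [← h2, hm.1]
      have := congrArg Fin.val h3
      omega
    have hnin : ¬ (0 < (f a : ℕ) ∧ (f a : ℕ) < 2*t+1) := by
      rintro ⟨hb1, hb2⟩
      have := hin (f a) hb1 (by omega)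
      rw [hm.1] at this
      omega
    have hnej : (f a : ℕ) ≠ 2*t+1 := by
      intro h
      have h5 : f a = f Z := Fin.ext (by omega)
      have h6 := congrArg Fin.val (hm.1.injective h5)
      have hZ0 : (Z : ℕ) = 0 := rfl
      omega
    omega

def exI (hi : i ≤ m) (f : Fin (2*(m+1)) → Fin (2*(m+1))) : Fin (2*i) → Fin (2*i) := fun x =>
  ⟨min ((f (embI hi x) : ℕ) - 1) (2*i-1), by have := x.isLt; omega⟩

def exO (hi : i ≤ m) (f : Fin (2*(m+1)) → Fin (2*(m+1))) :
    Fin (2*(m-i)) → Fin (2*(m-i)) := fun y =>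
  ⟨min ((f (embO hi y) : ℕ) - (2*i+2)) (2*(m-i)-1), by have := y.isLt; omega⟩

variable {hi : i ≤ m} {f : Fin (2*(m+1)) → Fin (2*(m+1))}

lemma embI_exI (hin : ∀ a : Fin (2*(m+1)), 0 < (a : ℕ) → (a : ℕ) < 2*i+1 →
    0 < (f a : ℕ) ∧ (f a : ℕ) < 2*i+1) (x : Fin (2*i)) :
    embI hi (exI hi f x) = f (embI hi x) := by
  have hx := x.isLt
  have hv : ((embI hi x : Fin (2*(m+1))) : ℕ) = (x : ℕ) + 1 := rfl
  obtain ⟨h1, h2⟩ := hin (embI hi x) (by omega) (by omega)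
  ext
  show min ((f (embI hi x) : ℕ) - 1) (2*i-1) + 1 = (f (embI hi x) : ℕ)
  omega

lemma embO_exO (hout : ∀ a : Fin (2*(m+1)), 2*i+1 < (a : ℕ) → 2*i+1 < (f a : ℕ))
    (y : Fin (2*(m-i))) :
    embO hi (exO hi f y) = f (embO hi y) := by
  have hy := y.isLt
  have hv : ((embO hi y : Fin (2*(m+1))) : ℕ) = (y : ℕ) + (2*i+2) := rfl
  have h1 := hout (embO hi y) (by omega)
  have h2 := (f (embO hi y)).isLt
  ext
  show min ((f (embO hi y) : ℕ) - (2*i+2)) (2*(m-i)-1) + (2*i+2) = (f (embO hi y) : ℕ)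
  omega

lemma aJm_recon (hm : IsMatching f) (hz : (f ⟨0, by omega⟩ : ℕ) = 2*i+1)
    (hin : ∀ a : Fin (2*(m+1)), 0 < (a : ℕ) → (a : ℕ) < 2*i+1 →
      0 < (f a : ℕ) ∧ (f a : ℕ) < 2*i+1)
    (hout : ∀ a : Fin (2*(m+1)), 2*i+1 < (a : ℕ) → 2*i+1 < (f a : ℕ)) :
    f = aJm hi (exI hi f) (exO hi f) := by
  funext j
  rcases aJm_cases hi j with h0 | ht | ⟨x, rfl⟩ | ⟨y, rfl⟩
  · rw [aJm_zero _ h0]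
    have hj : j = ⟨0, by omega⟩ := Fin.ext h0
    rw [hj]
    exact Fin.ext hz
  · rw [aJm_top _ ht]
    have hj : j = f ⟨0, by omega⟩ := Fin.ext (by rw [hz]; exact ht)
    rw [hj, hm.1]
  · rw [aJm_embI, embI_exI hin]
  · rw [aJm_embO, embO_exO hout]

lemma exI_matching (hm : IsMatching f)
    (hin : ∀ a : Fin (2*(m+1)), 0 < (a : ℕ) → (a : ℕ) < 2*i+1 →
      0 < (f a : ℕ) ∧ (f a : ℕ) < 2*i+1) : IsMatching (exI hi f) := by
  constructor
  · intro x
    apply embI_inj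
    rw [embI_exI hin, embI_exI hin, hm.1]
  · intro x hx
    apply hm.2 (embI hi x)
    rw [← embI_exI hin x, hx]

lemma exO_matching (hm : IsMatching f)
    (hout : ∀ a : Fin (2*(m+1)), 2*i+1 < (a : ℕ) → 2*i+1 < (f a : ℕ)) :
    IsMatching (exO hi f) := by
  constructor
  · intro y
    apply embO_inj
    rw [embO_exO hout, embO_exO hout, hm.1]
  · intro y hy
    apply hm.2 (embO hi y)
    rw [← embO_exO hout y, hy]

lemma exI_nc (hnc : ¬ HasCrossing f)
    (hin : ∀ a : Fin (2*(m+1)), 0 < (a : ℕ) → (a : ℕ) < 2*i+1 →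
      0 < (f a : ℕ) ∧ (f a : ℕ) < 2*i+1) : ¬ HasCrossing (exI hi f) := by
  rintro ⟨x, y, c1, c2, c3⟩
  have d1 : (x : ℕ) < (y : ℕ) := c1
  have d2 : (y : ℕ) < (exI hi f x : ℕ) := c2
  have d3 : (exI hi f x : ℕ) < (exI hi f y : ℕ) := c3
  refine hnc ⟨embI hi x, embI hi y, ?_, ?_, ?_⟩
  · show (x : ℕ) + 1 < (y : ℕ) + 1
    omega
  · rw [← embI_exI hin x]
    show (y : ℕ) + 1 < (exI hi f x : ℕ) + 1
    omega
  · rw [← embI_exI hin x, ← embI_exI hin y]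
    show (exI hi f x : ℕ) + 1 < (exI hi f y : ℕ) + 1
    omega

lemma exO_nc (hnc : ¬ HasCrossing f)
    (hout : ∀ a : Fin (2*(m+1)), 2*i+1 < (a : ℕ) → 2*i+1 < (f a : ℕ)) :
    ¬ HasCrossing (exO hi f) := by
  rintro ⟨x, y, c1, c2, c3⟩
  have d1 : (x : ℕ) < (y : ℕ) := c1
  have d2 : (y : ℕ) < (exO hi f x : ℕ) := c2
  have d3 : (exO hi f x : ℕ) < (exO hi f y : ℕ) := c3
  refine hnc ⟨embO hi x, embO hi y, ?_, ?_, ?_⟩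
  · show (x : ℕ) + (2*i+2) < (y : ℕ) + (2*i+2)
    omega
  · rw [← embO_exO hout x]
    show (y : ℕ) + (2*i+2) < (exO hi f x : ℕ) + (2*i+2)
    omega
  · rw [← embO_exO hout x, ← embO_exO hout y]
    show (exO hi f x : ℕ) + (2*i+2) < (exO hi f y : ℕ) + (2*i+2)
    omega

end aJmExtract

abbrev NCMt (m : ℕ) := {f : Fin (2*m) → Fin (2*m) // IsMatching f ∧ ¬ HasCrossing f}

lemma nat_card_sigma {n : ℕ} (β : Fin n → Type*) [∀ i, Finite (β i)] :
    Nat.card ((i : Fin n) × β i) = ∑ i, Nat.card (β i) := by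
  classical
  letI : ∀ i, Fintype (β i) := fun i => Fintype.ofFinite _
  simp [Nat.card_eq_fintype_card, Fintype.card_sigma]

noncomputable def NCMequiv (m : ℕ) :
    ((i : Fin (m+1)) × (NCMt (i : ℕ) × NCMt (m - (i : ℕ)))) ≃ NCMt (m+1) := by
  apply Equiv.ofBijective
    (fun q => ⟨aJm (Nat.lt_succ_iff.mp q.1.isLt) q.2.1.1 q.2.2.1,
      aJm_matching q.2.1.2.1 q.2.2.2.1, aJm_nc q.2.1.2.2 q.2.2.2.2⟩)
  constructor
  · rintro ⟨i, ⟨g, hg⟩, ⟨h, hh⟩⟩ ⟨i', ⟨g', hg'⟩, ⟨h', hh'⟩⟩ heq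
    simp only [Subtype.mk.injEq] at heq
    have h0 := congrFun heq ⟨0, by omega⟩
    rw [aJm_zero _ rfl, aJm_zero _ rfl] at h0
    have hval : 2*(i : ℕ)+1 = 2*(i' : ℕ)+1 := congrArg Fin.val h0
    have hii : i = i' := Fin.ext (by omega)
    subst hii
    have hgg : g = g' := by
      funext x
      have := congrFun heq (embI (Nat.lt_succ_iff.mp i.isLt) x)
      rw [aJm_embI, aJm_embI] at this
      exact embI_inj this
    have hhh : h = h' := by
      funext y
      have := congrFun heq (embO (Nat.lt_succ_iff.mp i.isLt) y)
      rw [aJm_embO, aJm_embO] at this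
      exact embO_inj this
    subst hgg
    subst hhh
    rfl
  · rintro ⟨f, hm, hnc⟩
    obtain ⟨i, hi, hz, hin, hout⟩ := arc_decomp f hm hnc
    refine ⟨⟨⟨i, by omega⟩, ⟨⟨exI hi f, exI_matching hm hin, exI_nc hnc hin⟩,
      ⟨exO hi f, exO_matching hm hout, exO_nc hnc hout⟩⟩⟩, ?_⟩
    exact Subtype.ext (aJm_recon hm hz hin hout).symm

theorem card_NCMt : ∀ m : ℕ, Nat.card (NCMt m) = catalan m := by
  intro m
  induction m using Nat.strong_induction_on with
  | _ m ih =>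
    match m with
    | 0 =>
      haveI : Unique (NCMt 0) := {
        default := ⟨fun a => a.elim0, ⟨⟨fun a => a.elim0, fun a => a.elim0⟩,
          by rintro ⟨a, _⟩; exact a.elim0⟩⟩
        uniq := fun x => Subtype.ext (funext fun a => a.elim0) }
      rw [Nat.card_unique, catalan_zero]
    | (m+1) =>
      rw [← Nat.card_congr (NCMequiv m), nat_card_sigma]
      rw [catalan_succ]
      apply Finset.sum_congr rfl
      intro i _
      rw [Nat.card_prod, ih _ (by omega : (i : ℕ) < m+1), ih _ (by omega : m - (i : ℕ) < m+1)]

lemma catalan_arith (s : ℕ) :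
    (2*s+3) * catalan (s+1) = (2*s+3).choose s + catalan (s+2) := by
  have h1 := succ_mul_catalan_eq_centralBinom (s+1)
  have h2 := succ_mul_catalan_eq_centralBinom (s+2)
  have h3 := Nat.succ_mul_centralBinom_succ (s+1)
  have h4 := Nat.add_one_mul_choose_eq (2*s+2) (s+1)
  have h5 := Nat.choose_succ_right_eq (2*s+3) s
  have h6 : (2*s+3).choose (s+2) = (2*s+3).choose (s+1) := by
    have := Nat.choose_symm (show s+1 ≤ 2*s+3 by omega)
    rw [show 2*s+3-(s+1) = s+2 by omega] at this
    exact this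
  have h7 : Nat.centralBinom (s+1) = (2*s+2).choose (s+1) := by
    rfl
  rw [h6] at h4
  rw [← h7] at h4
  rw [show 2*s+3-s = s+3 by omega] at h5
  have hmain : (s+2)*(s+3) * ((2*s+3) * catalan (s+1)) =
      (s+2)*(s+3) * ((2*s+3).choose s + catalan (s+2)) := by
    zify at h1 h2 h3 h4 h5 ⊢
    linear_combination (((s : ℤ)+3)*(2*s+3))*h1 - ((s : ℤ)+2)*h2 - h3 + ((s : ℤ)+1)*h4
      + ((s : ℤ)+2)*h5
  exact Nat.eq_of_mul_eq_mul_left (by positivity) hmain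

noncomputable def UncovEquiv (m : ℕ) :
    ((i : Fin (m+1)) × (NCMt (i : ℕ) × NCMt (m - (i : ℕ)))) ≃
      {q : (Fin (2*m) → Fin (2*m)) × Fin (2*m+1) //
        (IsMatching q.1 ∧ ¬ HasCrossing q.1) ∧ ¬ Covered q.1 q.2} := by
  apply Equiv.ofBijective
    (fun q => ⟨(pJm (Nat.lt_succ_iff.mp q.1.isLt) q.2.1.1 q.2.2.1,
        ⟨2*(q.1 : ℕ), by have := q.1.isLt; omega⟩),
      ⟨⟨pJm_matching q.2.1.2.1 q.2.2.2.1, pJm_nc q.2.1.2.2 q.2.2.2.2⟩,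
        pJm_notCovered _ _ _⟩⟩)
  constructor
  · rintro ⟨i, ⟨g, hg⟩, ⟨h, hh⟩⟩ ⟨i', ⟨g', hg'⟩, ⟨h', hh'⟩⟩ heq
    simp only [Subtype.mk.injEq, Prod.mk.injEq] at heq
    obtain ⟨heq1, heq2⟩ := heq
    have hval : 2*(i : ℕ) = 2*(i' : ℕ) := congrArg Fin.val heq2
    have hii : i = i' := Fin.ext (by omega)
    subst hii
    have hgg : g = g' := by
      funext x
      have := congrFun heq1 (embL (Nat.lt_succ_iff.mp i.isLt) x)
      rw [pJm_embL, pJm_embL] at this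
      exact embL_inj this
    have hhh : h = h' := by
      funext y
      have := congrFun heq1 (embR (Nat.lt_succ_iff.mp i.isLt) y)
      rw [pJm_embR, pJm_embR] at this
      exact embR_inj this
    subst hgg
    subst hhh
    rfl
  · rintro ⟨⟨f, k⟩, ⟨⟨hm, hnc⟩, hcov⟩⟩
    have hcov' : ¬ Covered f k := hcov
    have hcl' : ∀ a : Fin (2*m), (a : ℕ) < (k : ℕ) → (f a : ℕ) < (k : ℕ) := by
      intro a ha
      by_contra hge
      exact hcov' ⟨a, ha, by omega⟩
    have hk2m : (k : ℕ) ≤ 2*m := by have := k.isLt; omega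
    obtain ⟨i, hik⟩ := closure_even ⟨hm.1, hm.2⟩ (k : ℕ) hk2m hcl'
    have hi : i ≤ m := by omega
    have hcl : ∀ a : Fin (2*m), (a : ℕ) < 2*i → (f a : ℕ) < 2*i := by
      intro a ha
      have := hcl' a (by omega)
      omega
    refine ⟨⟨⟨i, by omega⟩, ⟨⟨exL hi f, exL_matching hi hcl hm, exL_nc hi hcl hm hnc⟩,
      ⟨exR hi f, exR_matching hi hcl hm, exR_nc hi hcl hm hnc⟩⟩⟩, ?_⟩
    apply Subtype.ext
    show (pJm hi (exL hi f) (exR hi f), _) = (f, k)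
    refine Prod.ext ?_ ?_
    · exact (pJm_recon hi hcl hm).symm
    · exact Fin.ext (by show 2*i = (k : ℕ); omega)

theorem card_uncov (m : ℕ) :
    Nat.card {q : (Fin (2*m) → Fin (2*m)) × Fin (2*m+1) //
      (IsMatching q.1 ∧ ¬ HasCrossing q.1) ∧ ¬ Covered q.1 q.2} = catalan (m+1) := by
  rw [← Nat.card_congr (UncovEquiv m), nat_card_sigma, catalan_succ]
  apply Finset.sum_congr rfl
  intro i _
  rw [Nat.card_prod, card_NCMt, card_NCMt]

noncomputable def TotalEquiv (m : ℕ) :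
    {q : (Fin (2*m) → Fin (2*m)) × Fin (2*m+1) // IsMatching q.1 ∧ ¬ HasCrossing q.1} ≃
      NCMt m × Fin (2*m+1) where
  toFun q := (⟨q.1.1, q.2⟩, q.1.2)
  invFun x := ⟨(x.1.1, x.2), x.1.2⟩
  left_inv q := rfl
  right_inv x := rfl

theorem card_total (m : ℕ) :
    Nat.card {q : (Fin (2*m) → Fin (2*m)) × Fin (2*m+1) //
      IsMatching q.1 ∧ ¬ HasCrossing q.1} = catalan m * (2*m+1) := by
  rw [Nat.card_congr (TotalEquiv m), Nat.card_prod, card_NCMt, Nat.card_eq_fintype_card,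
    Fintype.card_fin]

lemma card_split {α : Type*} [Finite α] (p r : α → Prop) :
    Nat.card {x // p x ∧ r x} + Nat.card {x // p x ∧ ¬ r x} = Nat.card {x // p x} := by
  classical
  rw [← Nat.card_congr (Equiv.subtypeSubtypeEquivSubtypeInter p r),
    ← Nat.card_congr (Equiv.subtypeSubtypeEquivSubtypeInter p (fun x => ¬ r x)),
    ← Nat.card_sum]
  exact Nat.card_congr (Equiv.sumCompl _)

theorem card_cov (m : ℕ) (hm1 : 1 ≤ m) :
    Nat.card {q : (Fin (2*m) → Fin (2*m)) × Fin (2*m+1) //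
      (IsMatching q.1 ∧ ¬ HasCrossing q.1) ∧ Covered q.1 q.2} =
      (2*m+1).choose (m-1) := by
  have hsplit := card_split (α := (Fin (2*m) → Fin (2*m)) × Fin (2*m+1))
    (fun q => IsMatching q.1 ∧ ¬ HasCrossing q.1) (fun q => Covered q.1 q.2)
  rw [card_uncov, card_total] at hsplit
  obtain ⟨s, rfl⟩ : ∃ s, m = s + 1 := ⟨m - 1, by omega⟩
  have harith := catalan_arith s
  have h1 : 2*(s+1)+1 = 2*s+3 := by omega
  have h2 : s+1-1 = s := by omega
  conv_rhs => rw [h1, h2]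
  have hP : catalan (s+1) * (2*(s+1)+1) = (2*s+3).choose s + catalan (s+1+1) := by
    rw [h1, mul_comm]
    exact harith
  rw [hP] at hsplit
  omega


theorem mu_1212_closed_form (n : ℕ) (hn : 2 ≤ n) :
    Nat.card {f : Fin (2 * n) → Fin (2 * n) // IsMatching f ∧ MinContains p1212 f} =
      Nat.choose (2 * n - 1) (n - 2) := by
  obtain ⟨m, hm1, rfl⟩ : ∃ m, 1 ≤ m ∧ n = m + 1 := ⟨n - 1, by omega, by omega⟩
  show Nat.card {f : Fin (2*m+2) → Fin (2*m+2) // IsMatching f ∧ MinContains p1212 f} =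
    Nat.choose (2*(m+1) - 1) ((m+1) - 2)
  rw [card_S m, card_cov m hm1]
  congr 1 <;> omega
end

section
/- For every n ≥ 1, the number of matchings of [2n] avoiding the unlabeled pattern [1122] equals 1; the unique such matching is the totally crossing matching 12...n12...n. -/
def totCross (n : ℕ) : Fin (2 * n) → Fin (2 * n) := fun i =>
  if h : i.val < n then ⟨i.val + n, by omega⟩
  else ⟨i.val - n, by have := i.isLt; omega⟩


section AuxProof

lemma sm4 {M : ℕ} {a b c d : Fin M} (hab : a < b) (hbc : b < c) (hcd : c < d) :
    StrictMono ![a, b, c, d] := by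
  rw [Fin.strictMono_iff_lt_succ]
  intro i
  fin_cases i <;> simpa

lemma occurs1122 {M : ℕ} {f : Fin M → Fin M} (hinv : Function.Involutive f)
    {a b c d : Fin M} (hab : a < b) (hbc : b < c) (hcd : c < d)
    (h1 : f a = b) (h2 : f c = d) : Occurs p1122 f := by
  have hb : f b = a := by rw [← h1, hinv]
  have hd : f d = c := by rw [← h2, hinv]
  refine ⟨![a, b, c, d], sm4 hab hbc hcd, ?_⟩
  intro p
  fin_cases p <;> simp [p1122, h1, h2, hb, hd]

lemma occurs1221 {M : ℕ} {f : Fin M → Fin M} (hinv : Function.Involutive f)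
    {a b c d : Fin M} (hab : a < b) (hbc : b < c) (hcd : c < d)
    (h1 : f a = d) (h2 : f b = c) : Occurs p1221 f := by
  have hd : f d = a := by rw [← h1, hinv]
  have hc : f c = b := by rw [← h2, hinv]
  refine ⟨![a, b, c, d], sm4 hab hbc hcd, ?_⟩
  intro p
  fin_cases p <;> simp [p1221, h1, h2, hc, hd]

lemma cross_lemma {M : ℕ} {f : Fin M → Fin M} (hinv : Function.Involutive f)
    (h1 : Avoids p1122 f) (h2 : Avoids p1221 f)
    {a c : Fin M} (ha : a < f a) (hc : c < f c) (hac : a < c) :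
    c < f a ∧ f a < f c := by
  have hfa_ne : f a ≠ c := by
    intro h
    have : f c = a := by rw [← h, hinv]
    rw [this] at hc
    exact absurd (hac.trans hc) (lt_irrefl a)
  have hcfa : c < f a := by
    rcases lt_trichotomy (f a) c with h | h | h
    · exact absurd (occurs1122 hinv ha h hc rfl rfl) h1
    · exact absurd h hfa_ne
    · exact h
  refine ⟨hcfa, ?_⟩
  rcases lt_trichotomy (f c) (f a) with h | h | h
  · exact absurd (occurs1221 hinv hac hc h rfl rfl) h2
  · exact absurd (hinv.injective h) (ne_of_gt hac)
  · exact h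

lemma totCross_isMatching (n : ℕ) : IsMatching (totCross n) := by
  constructor
  · intro i
    have hi := i.isLt
    apply Fin.ext
    unfold totCross
    by_cases h : (i : ℕ) < n
    · rw [dif_pos h,
        dif_neg (show ¬ ((⟨(i : ℕ) + n, by omega⟩ : Fin (2 * n)) : ℕ) < n by simp)]
      simp
    · rw [dif_neg h,
        dif_pos (show ((⟨(i : ℕ) - n, by omega⟩ : Fin (2 * n)) : ℕ) < n by simp; omega)]
      simp
      omega
  · intro i h
    have hi := i.isLt
    have := congrArg Fin.val h
    unfold totCross at this
    by_cases h' : (i : ℕ) < n <;> simp [h'] at this <;> omega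

lemma totCross_edge {n : ℕ} {i j : Fin (2 * n)} (hij : i < j) (h : totCross n i = j) :
    (i : ℕ) < n ∧ (j : ℕ) = (i : ℕ) + n := by
  have hv := congrArg Fin.val h
  have hij' : (i : ℕ) < (j : ℕ) := hij
  unfold totCross at hv
  by_cases h' : (i : ℕ) < n
  · simp [h'] at hv
    exact ⟨h', hv.symm⟩
  · simp [h'] at hv
    omega

lemma totCross_avoids1122 (n : ℕ) : Avoids p1122 (totCross n) := by
  rintro ⟨g, hg, hocc⟩
  have h01 : g 0 < g 1 := hg (by decide)
  have h12 : g 1 < g 2 := hg (by decide)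
  have h23 : g 2 < g 3 := hg (by decide)
  have e0 := hocc 0
  have e2 := hocc 2
  simp only [p1122] at e0 e2
  rw [show (![1,0,3,2] : Fin 4 → Fin 4) 0 = 1 from rfl] at e0
  rw [show (![1,0,3,2] : Fin 4 → Fin 4) 2 = 3 from rfl] at e2
  obtain ⟨ha, hb⟩ := totCross_edge h01 e0
  obtain ⟨hc, hd⟩ := totCross_edge h23 e2
  have h12' : ((g 1 : Fin (2*n)) : ℕ) < ((g 2 : Fin (2*n)) : ℕ) := h12
  omega

lemma totCross_avoids1221 (n : ℕ) : Avoids p1221 (totCross n) := by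
  rintro ⟨g, hg, hocc⟩
  have h01 : g 0 < g 1 := hg (by decide)
  have h12 : g 1 < g 2 := hg (by decide)
  have h23 : g 2 < g 3 := hg (by decide)
  have e0 := hocc 0
  have e1 := hocc 1
  simp only [p1221] at e0 e1
  rw [show (![3,2,1,0] : Fin 4 → Fin 4) 0 = 3 from rfl] at e0
  rw [show (![3,2,1,0] : Fin 4 → Fin 4) 1 = 2 from rfl] at e1
  obtain ⟨ha, hb⟩ := totCross_edge (h01.trans (h12.trans h23)) e0
  obtain ⟨hc, hd⟩ := totCross_edge h12 e1
  have h01' : ((g 0 : Fin (2*n)) : ℕ) < ((g 1 : Fin (2*n)) : ℕ) := h01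
  have h23' : ((g 2 : Fin (2*n)) : ℕ) < ((g 3 : Fin (2*n)) : ℕ) := h23
  omega

lemma eq_totCross {n : ℕ} (hn : 1 ≤ n) {f : Fin (2 * n) → Fin (2 * n)}
    (hinv : Function.Involutive f) (hfix : ∀ i, f i ≠ i)
    (h1 : Avoids p1122 f) (h2 : Avoids p1221 f) : f = totCross n := by
  -- downward closedness of the set of left endpoints
  have hdc : ∀ i j : Fin (2 * n), j ≤ i → i < f i → j < f j := by
    intro i j hji hi
    rcases eq_or_lt_of_le hji with rfl | hji
    · exact hi
    by_contra hj
    have hj' : f j < j := lt_of_le_of_ne (not_lt.mp hj) (hfix j)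
    have ha : f j < f (f j) := by rw [hinv]; exact hj'
    have hlt : f j < i := lt_trans hj' hji
    have := (cross_lemma hinv h1 h2 ha hi hlt).1
    rw [hinv] at this
    exact absurd (hji.trans this) (lt_irrefl j)
  -- cardinality of left endpoints
  set L : Finset (Fin (2 * n)) := Finset.univ.filter (fun i => i < f i) with hL
  have hcardL : L.card = n := by
    have hbij : L.card = (Finset.univ.filter (fun i => f i < i)).card := by
      apply Finset.card_bij' (fun i _ => f i) (fun j _ => f j)
      · intro a ha
        simp only [hL, Finset.mem_filter, Finset.mem_univ, true_and] at ha ⊢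
        rw [hinv]; exact ha
      · intro a ha
        simp only [Finset.mem_filter, Finset.mem_univ, true_and, hL] at ha ⊢
        rw [hinv]; exact ha
      · intro a _; exact hinv a
      · intro a _; exact hinv a
    have hsplit := Finset.card_filter_add_card_filter_not
      (s := (Finset.univ : Finset (Fin (2 * n)))) (p := fun i => i < f i)
    have hneg : Finset.univ.filter (fun i => ¬ i < f i)
        = Finset.univ.filter (fun i => f i < i) := by
      apply Finset.filter_congr
      intro i _
      constructor
      · intro h; exact lt_of_le_of_ne (not_lt.mp h) (hfix i)
      · intro h; exact not_lt.mpr h.le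
    rw [hneg] at hsplit
    rw [← hbij, ← hL] at hsplit
    simp only [Finset.card_univ, Fintype.card_fin] at hsplit
    omega
  -- left endpoints are exactly the first n vertices
  have memL : ∀ i : Fin (2 * n), (i : ℕ) < n ↔ i < f i := by
    intro i
    constructor
    · intro hi
      by_contra h'
      have hsub : L ⊆ Finset.Iio i := by
        intro j hj
        simp only [hL, Finset.mem_filter, Finset.mem_univ, true_and] at hj
        simp only [Finset.mem_Iio]
        by_contra hji
        exact h' (hdc j i (not_lt.mp hji) hj)
      have := Finset.card_le_card hsub
      rw [hcardL, Fin.card_Iio] at this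
      omega
    · intro hi
      by_contra h'
      have hsub : Finset.Iic i ⊆ L := by
        intro j hj
        simp only [Finset.mem_Iic] at hj
        simp only [hL, Finset.mem_filter, Finset.mem_univ, true_and]
        exact hdc i j hj hi
      have := Finset.card_le_card hsub
      rw [hcardL, Fin.card_Iic] at this
      omega
  -- lower bound on values
  have lb : ∀ k, ∀ hk : k < n, n + k ≤ ((f ⟨k, by omega⟩ : Fin (2 * n)) : ℕ) := by
    intro k
    induction k with
    | zero =>
      intro hk
      have h0 : (⟨0, by omega⟩ : Fin (2 * n)) < f ⟨0, by omega⟩ :=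
        (memL _).1 (by simpa)
      by_contra hlt
      have := (memL _).1 (by omega : ((f ⟨0, by omega⟩ : Fin (2 * n)) : ℕ) < n)
      rw [hinv] at this
      exact absurd (h0.trans this) (lt_irrefl _)
    | succ k ih =>
      intro hk
      have hk' : k < n := by omega
      have ha : (⟨k, by omega⟩ : Fin (2 * n)) < f ⟨k, by omega⟩ :=
        (memL _).1 (by simpa using hk')
      have hc : (⟨k + 1, by omega⟩ : Fin (2 * n)) < f ⟨k + 1, by omega⟩ :=
        (memL _).1 (by simpa using hk)
      have hac : (⟨k, by omega⟩ : Fin (2 * n)) < ⟨k + 1, by omega⟩ := by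
        simp [Fin.mk_lt_mk]
      have := (cross_lemma hinv h1 h2 ha hc hac).2
      have hlt : ((f ⟨k, by omega⟩ : Fin (2 * n)) : ℕ)
          < ((f ⟨k + 1, by omega⟩ : Fin (2 * n)) : ℕ) := this
      have := ih hk'
      omega
  -- upper bound on values
  have ub : ∀ j, ∀ hj : j < n,
      ((f ⟨n - 1 - j, by omega⟩ : Fin (2 * n)) : ℕ) ≤ 2 * n - 1 - j := by
    intro j
    induction j with
    | zero =>
      intro hj
      have := (f (⟨n - 1 - 0, by omega⟩ : Fin (2 * n))).isLt
      omega
    | succ j ih =>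
      intro hj
      have hj' : j < n := by omega
      have ha : (⟨n - 1 - (j + 1), by omega⟩ : Fin (2 * n))
          < f ⟨n - 1 - (j + 1), by omega⟩ := (memL _).1 (by simp; omega)
      have hc : (⟨n - 1 - j, by omega⟩ : Fin (2 * n))
          < f ⟨n - 1 - j, by omega⟩ := (memL _).1 (by simp; omega)
      have hac : (⟨n - 1 - (j + 1), by omega⟩ : Fin (2 * n))
          < ⟨n - 1 - j, by omega⟩ := by
        simp only [Fin.mk_lt_mk]; omega
      have hlt : ((f ⟨n - 1 - (j + 1), by omega⟩ : Fin (2 * n)) : ℕ)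
          < ((f ⟨n - 1 - j, by omega⟩ : Fin (2 * n)) : ℕ) :=
        (cross_lemma hinv h1 h2 ha hc hac).2
      have := ih hj'
      omega
  -- exact values on the left half
  have fval : ∀ i : Fin (2 * n), (i : ℕ) < n → ((f i : Fin (2 * n)) : ℕ) = (i : ℕ) + n := by
    intro i hi
    have heq : (⟨(i : ℕ), by omega⟩ : Fin (2 * n)) = i := Fin.ext rfl
    have hlb := lb (i : ℕ) hi
    have hub := ub (n - 1 - (i : ℕ)) (by omega)
    have heq2 : (⟨n - 1 - (n - 1 - (i : ℕ)), by omega⟩ : Fin (2 * n)) = i :=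
      Fin.ext (by simp; omega)
    rw [heq] at hlb
    rw [heq2] at hub
    omega
  -- conclude
  funext i
  by_cases hi : (i : ℕ) < n
  · apply Fin.ext
    rw [fval i hi]
    unfold totCross
    simp [hi]
  · have hfi : f i < i := lt_of_le_of_ne
      (not_lt.mp (fun h => hi ((memL i).2 h))) (hfix i)
    have hfiL : ((f i : Fin (2 * n)) : ℕ) < n :=
      (memL (f i)).2 (by rw [hinv]; exact hfi)
    have := fval (f i) hfiL
    rw [hinv] at this
    apply Fin.ext
    unfold totCross
    simp [hi]
    omega

end AuxProof

theorem avoid_unlabeled_1122 (n : ℕ) (hn : 1 ≤ n) :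
    Nat.card {f : Fin (2 * n) → Fin (2 * n) //
        IsMatching f ∧ Avoids p1122 f ∧ Avoids p1221 f} = 1 ∧
    ∀ f : Fin (2 * n) → Fin (2 * n),
      (IsMatching f ∧ Avoids p1122 f ∧ Avoids p1221 f) ↔ f = totCross n := by
  have key : ∀ f : Fin (2 * n) → Fin (2 * n),
      (IsMatching f ∧ Avoids p1122 f ∧ Avoids p1221 f) ↔ f = totCross n := by
    intro f
    constructor
    · rintro ⟨⟨hinv, hfix⟩, h1, h2⟩
      exact eq_totCross hn hinv hfix h1 h2
    · rintro rfl
      exact ⟨totCross_isMatching n, totCross_avoids1122 n, totCross_avoids1221 n⟩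
  refine ⟨?_, key⟩
  rw [Nat.card_eq_one_iff_unique]
  constructor
  · exact ⟨fun a b => Subtype.ext (((key a.1).1 a.2).trans ((key b.1).1 b.2).symm)⟩
  · exact ⟨⟨totCross n, (key _).2 rfl⟩⟩
end
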